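/- Assume there exists an integer d₀ ≥ 2 such that ω(Φ_d(2)) ≤ 10·log d holds for every integer d ≥ d₀. Then there exists a constant C > 0 such that for every integer N ≥ 2, τ(2^N − 1) ≤ 2^{C·τ(N)·(log N)²}. -/
import Mathlib


/-- `τ(n)`: the number of positive divisors of `n`. -/
def tau (n : ℕ) : ℕ := n.divisors.card

/-- `ω(n)`: the number of distinct prime factors of `n`. -/
def omega (n : ℕ) : ℕ := n.primeFactors.card

/-- `Φ_d(2)`: the value of the `d`-th cyclotomic polynomial at `2`, as a natural number. -/
noncomputable def Phi2 (d : ℕ) : ℕ := ((Polynomial.cyclotomic d ℤ).eval 2).toNat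

lemma prod_Phi2 {N : ℕ} (hN : 0 < N) : ∏ d ∈ N.divisors, Phi2 d = 2 ^ N - 1 := by
  have key : ∏ d ∈ N.divisors, (Polynomial.cyclotomic d ℤ).eval 2 = 2 ^ N - 1 := by
    rw [← Polynomial.eval_prod, Polynomial.prod_cyclotomic_eq_X_pow_sub_one hN ℤ]
    simp
  have hpos : ∀ d ∈ N.divisors, 0 ≤ (Polynomial.cyclotomic d ℤ).eval 2 :=
    fun d _ => (Polynomial.cyclotomic_pos' d (by norm_num : (1:ℤ) < 2)).le
  have h1 : ((∏ d ∈ N.divisors, Phi2 d : ℕ) : ℤ) = 2 ^ N - 1 := by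
    push_cast
    rw [← key]
    exact Finset.prod_congr rfl fun d hd => Int.toNat_of_nonneg (hpos d hd)
  have h2 : ((2 ^ N - 1 : ℕ) : ℤ) = 2 ^ N - 1 := by
    have : 1 ≤ 2 ^ N := Nat.one_le_two_pow
    push_cast [this]
    ring
  exact_mod_cast h1.trans h2.symm

lemma Phi2_dvd {d : ℕ} (hd : 0 < d) : Phi2 d ∣ 2 ^ d - 1 := by
  rw [← prod_Phi2 hd]
  exact Finset.dvd_prod_of_mem _ (Nat.mem_divisors_self d hd.ne')

lemma two_pow_sub_one_pos {d : ℕ} (hd : 0 < d) : 0 < 2 ^ d - 1 := by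
  have : 2 ≤ 2 ^ d := Nat.le_self_pow hd.ne' 2
  omega

lemma Phi2_pos {d : ℕ} (hd : 0 < d) : 0 < Phi2 d :=
  Nat.pos_of_ne_zero fun h => by
    have := (zero_dvd_iff.mp (h ▸ Phi2_dvd hd))
    have := two_pow_sub_one_pos hd
    omega

lemma Phi2_le {d : ℕ} (hd : 0 < d) : Phi2 d ≤ 2 ^ d :=
  (Nat.le_of_dvd (two_pow_sub_one_pos hd) (Phi2_dvd hd)).trans (Nat.sub_le _ _)

lemma omega_le_self (n : ℕ) : omega n ≤ n := by
  rcases Nat.eq_zero_or_pos n with rfl | hn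
  · simp [omega]
  have hsub : n.primeFactors ⊆ Finset.Icc 1 n := fun p hp => Finset.mem_Icc.2
    ⟨(Nat.prime_of_mem_primeFactors hp).one_lt.le.trans' (by norm_num),
      Nat.le_of_dvd hn (Nat.dvd_of_mem_primeFactors hp)⟩
  calc omega n ≤ (Finset.Icc 1 n).card := Finset.card_le_card hsub
    _ = n := by simp

lemma omega_prod_le {s : Finset ℕ} {f : ℕ → ℕ} (hf : ∀ d ∈ s, f d ≠ 0) :
    omega (∏ d ∈ s, f d) ≤ ∑ d ∈ s, omega (f d) := by
  have hsub : (∏ d ∈ s, f d).primeFactors ⊆ s.biUnion fun d => (f d).primeFactors := by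
    intro p hp
    have hpp := Nat.prime_of_mem_primeFactors hp
    obtain ⟨d, hd, hpd⟩ := hpp.prime.exists_mem_finset_dvd (Nat.dvd_of_mem_primeFactors hp)
    exact Finset.mem_biUnion.2 ⟨d, hd, Nat.mem_primeFactors.2 ⟨hpp, hpd, hf d hd⟩⟩
  calc omega _ ≤ (s.biUnion fun d => (f d).primeFactors).card := Finset.card_le_card hsub
    _ ≤ ∑ d ∈ s, omega (f d) := Finset.card_biUnion_le

lemma tau_le_pow_omega {m N : ℕ} (hm : 0 < m) (hle : m ≤ 2 ^ N) :
    tau m ≤ (N + 1) ^ omega m := by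
  rw [tau, Nat.card_divisors hm.ne']
  apply Finset.prod_le_pow_card
  intro p hp
  have hpp := Nat.prime_of_mem_primeFactors hp
  have h1 : p ^ m.factorization p ≤ 2 ^ N := (Nat.ordProj_le p hm.ne').trans hle
  have h2 : 2 ^ m.factorization p ≤ p ^ m.factorization p :=
    Nat.pow_le_pow_left hpp.two_le _
  have := (Nat.pow_le_pow_iff_right (by norm_num : 1 < 2)).mp (h2.trans h1)
  omega

/-- If `ω(Φ_d(2)) ≤ 10 log d` for all `d ≥ d₀`, then there is `C > 0` with
`τ(2^N - 1) ≤ 2^{C τ(N) (log N)²}` for all `N ≥ 2`. -/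
theorem tau_mersenne_upper_bound_of_cyclotomic_conjecture
    (h : ∃ d₀ : ℕ, 2 ≤ d₀ ∧
      ∀ d : ℕ, d₀ ≤ d → (omega (Phi2 d) : ℝ) ≤ 10 * Real.log d) :
    ∃ C : ℝ, 0 < C ∧ ∀ N : ℕ, 2 ≤ N →
      (tau (2 ^ N - 1) : ℝ)
        ≤ (2 : ℝ) ^ (C * (tau N : ℝ) * (Real.log N) ^ 2) := by
  obtain ⟨d₀, hd₀, hconj⟩ := h
  have hlog2 : (0:ℝ) < Real.log 2 := Real.log_pos (by norm_num)
  set K : ℝ := ((2 ^ d₀ : ℕ) : ℝ) with hK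
  have hK0 : 0 ≤ K := by positivity
  set A : ℝ := K / Real.log 2 + 10 with hA
  have hA0 : 0 < A := by positivity
  refine ⟨2 / Real.log 2 * A, by positivity, fun N hN => ?_⟩
  have hN0 : 0 < N := by omega
  have hlogN : Real.log 2 ≤ Real.log N := by
    apply Real.log_le_log (by norm_num)
    exact_mod_cast hN
  have hlogN0 : 0 < Real.log N := hlog2.trans_le hlogN
  set M := 2 ^ N - 1 with hM
  have hM0 : 0 < M := two_pow_sub_one_pos hN0
  have step1 : (omega M : ℝ) ≤ A * tau N * Real.log N := by
    have h1 : omega M ≤ ∑ d ∈ N.divisors, omega (Phi2 d) := by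
      rw [hM, ← prod_Phi2 hN0]
      exact omega_prod_le fun d hd => (Phi2_pos (Nat.pos_of_mem_divisors hd)).ne'
    have h2 : (∑ d ∈ N.divisors, (omega (Phi2 d) : ℝ)) ≤
        ∑ _d ∈ N.divisors, (K + 10 * Real.log N) := by
      apply Finset.sum_le_sum
      intro d hd
      have hd0 : 0 < d := Nat.pos_of_mem_divisors hd
      have hdN : d ≤ N := Nat.le_of_dvd hN0 (Nat.dvd_of_mem_divisors hd)
      rcases le_or_gt d₀ d with hge | hlt
      · have := hconj d hge
        have hld : Real.log d ≤ Real.log N := by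
          apply Real.log_le_log (by exact_mod_cast hd0)
          exact_mod_cast hdN
        nlinarith
      · have h3 : (omega (Phi2 d) : ℝ) ≤ K := by
          have : omega (Phi2 d) ≤ 2 ^ d₀ :=
            (omega_le_self _).trans ((Phi2_le hd0).trans (Nat.pow_le_pow_right (by norm_num) hlt.le))
          rw [hK]
          exact_mod_cast this
        nlinarith
    have h4 : (∑ _d ∈ N.divisors, (K + 10 * Real.log N)) = tau N * (K + 10 * Real.log N) := by
      rw [Finset.sum_const, nsmul_eq_mul]; rfl
    have h5 : K + 10 * Real.log N ≤ A * Real.log N := by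
      rw [hA, add_mul, div_mul_eq_mul_div]
      have : K ≤ K * Real.log N / Real.log 2 := by
        rw [le_div_iff₀ hlog2]
        nlinarith
      linarith
    have h6 : (omega M : ℝ) ≤ ∑ d ∈ N.divisors, (omega (Phi2 d) : ℝ) := by
      exact_mod_cast h1
    have h7 : (0:ℝ) ≤ tau N := by positivity
    calc (omega M : ℝ) ≤ tau N * (K + 10 * Real.log N) := by linarith [h6.trans (h2.trans_eq h4)]
      _ ≤ tau N * (A * Real.log N) := by nlinarith
      _ = A * tau N * Real.log N := by ring
  set x : ℝ := 2 / Real.log 2 * Real.log N with hx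
  have hx0 : 0 < x := by positivity
  have hpow : (2:ℝ) ^ x = (N:ℝ) ^ 2 := by
    rw [Real.rpow_def_of_pos (by norm_num : (0:ℝ) < 2)]
    rw [hx]
    rw [show Real.log 2 * (2 / Real.log 2 * Real.log N) = 2 * Real.log N by
      field_simp]
    rw [show (2:ℝ) * Real.log N = Real.log ((N:ℝ)^2) by
      rw [Real.log_pow]; push_cast; ring]
    exact Real.exp_log (by positivity)
  have step2 : (tau M : ℝ) ≤ (2:ℝ) ^ (x * omega M) := by
    have h1 : tau M ≤ (N + 1) ^ omega M :=
      tau_le_pow_omega hM0 (by omega)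
    have h2 : ((N:ℝ) + 1) ≤ (N:ℝ) ^ 2 := by
      have : (2:ℝ) ≤ N := by exact_mod_cast hN
      nlinarith
    calc (tau M : ℝ) ≤ ((N:ℝ) + 1) ^ omega M := by exact_mod_cast h1
      _ ≤ ((N:ℝ) ^ 2) ^ omega M := pow_le_pow_left₀ (by positivity) h2 _
      _ = ((2:ℝ) ^ x) ^ (omega M : ℕ) := by rw [hpow]
      _ = (2:ℝ) ^ (x * omega M) := by
          rw [← Real.rpow_natCast ((2:ℝ)^x) (omega M), ← Real.rpow_mul (by norm_num)]
  refine step2.trans ?_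
  apply Real.rpow_le_rpow_of_exponent_le (by norm_num)
  have hmain : x * omega M ≤ x * (A * tau N * Real.log N) :=
    mul_le_mul_of_nonneg_left step1 hx0.le
  calc x * omega M ≤ x * (A * tau N * Real.log N) := hmain
    _ = 2 / Real.log 2 * A * tau N * Real.log N ^ 2 := by rw [hx]; ring
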